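/- For every feasible point of the nonconvex formulation in which at least one agent leaves the depot (i.e. Σ_{k ∈ V_agt} Σ_{e ∈ E_s^out} y_{e,k} ≥ 1), there exists a feasible point of the MICP formulation with the same objective value; it is obtained by aggregating over agents, i.e. setting y_e := Σ_k y_{e,k}, l_e := Σ_k l_{e,k}, l^{xy}_e := Σ_k l^{xy}_{e,k}, z_{e,p} := Σ_k z_{e,k,p}, z_{e,t} := Σ_k z_{e,k,t}, z′_{e,p} := Σ_k z′_{e,k,p}, z′_{e,t} := Σ_k z′_{e,k,t}, and α := Σ_k Σ_{e ∈ E_s^out} y_{e,k}. In particular the optimal value of the MICP formulation is at most the optimal value of the nonconvex formulation over such points. -/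
import Mathlib


open scoped BigOperators Classical

noncomputable section

/-- The Euclidean plane ℝ². -/
abbrev Plane := EuclideanSpace ℝ (Fin 2)

/-- Nodes of the graph: `Sum.inl i` is the segment node `i ∈ V_seg`,
`Sum.inr false` is the depot `s`, and `Sum.inr true` is the depot copy `s'`. -/
abbrev Node (ι : Type*) := ι ⊕ Bool

/-- The data of an MA-MT-TSP instance: a finite type `ι` of segment nodes, a finite
type `υ` of targets, a cluster assignment `cl` whose surjectivity expresses that every
cluster is nonempty, time windows `tlo i ≤ thi i`, start positions `pos`, velocities
`vel` (vanishing at the depot and its copy), a maximum speed `vmax > 0`, and a number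
of agents `m ≥ 1`. -/
structure MTData (ι υ : Type*) where
  cl : ι → υ
  cl_surj : Function.Surjective cl
  tlo : Node ι → ℝ
  thi : Node ι → ℝ
  tw : ∀ i, tlo i ≤ thi i
  pos : Node ι → Plane
  vel : Node ι → Plane
  vel_s : vel (Sum.inr false) = 0
  vel_s' : vel (Sum.inr true) = 0
  vmax : ℝ
  vmax_pos : 0 < vmax
  m : ℕ
  m_pos : 1 ≤ m

variable {ι υ : Type*} [Fintype ι] [Fintype υ]

/-- The edge relation: from the depot `s` to every segment node, between segment nodes
in different clusters, and from every segment node to the depot copy `s'`. -/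
def isEdge (D : MTData ι υ) : Node ι → Node ι → Prop
  | Sum.inr false, Sum.inl _ => True
  | Sum.inl i, Sum.inl j => D.cl i ≠ D.cl j
  | Sum.inl _, Sum.inr true => True
  | _, _ => False

/-- The edge set `E` as a finite set of ordered pairs of nodes. -/
def edges (D : MTData ι υ) : Finset (Node ι × Node ι) :=
  Finset.univ.filter fun e => isEdge D e.1 e.2

/-- `E_i^in`: the edges of `E` entering node `i`. -/
def inE (D : MTData ι υ) (i : Node ι) : Finset (Node ι × Node ι) :=
  (edges D).filter fun e => e.2 = i

/-- `E_i^out`: the edges of `E` exiting node `i`. -/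
def outE (D : MTData ι υ) (i : Node ι) : Finset (Node ι × Node ι) :=
  (edges D).filter fun e => e.1 = i

/-- A point of the nonconvex formulation: edge variables `y`, `l`, `lxy`, `zp`, `zt`,
`zp'`, `zt'` for each edge and agent, and node variables `t`, `p` for each node and
agent.  Agents are indexed by `Fin m`. -/
structure NCPoint (ι : Type*) (m : ℕ) where
  y : Node ι × Node ι → Fin m → ℝ
  l : Node ι × Node ι → Fin m → ℝ
  lxy : Node ι × Node ι → Fin m → Plane
  zp : Node ι × Node ι → Fin m → Plane
  zt : Node ι × Node ι → Fin m → ℝ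
  zp' : Node ι × Node ι → Fin m → Plane
  zt' : Node ι × Node ι → Fin m → ℝ
  t : Node ι → Fin m → ℝ
  p : Node ι → Fin m → Plane

variable {ι υ : Type*} [Fintype ι] [Fintype υ]

/-- Feasibility for the nonconvex formulation. -/
def NCFeas (D : MTData ι υ) (P : NCPoint ι D.m) : Prop :=
  (∀ e ∈ edges D, ∀ k, P.y e k = 0 ∨ P.y e k = 1) ∧
  (∀ e ∈ edges D, ∀ k, 0 ≤ P.l e k) ∧
  (∀ k, ∑ e ∈ outE D (Sum.inr false), P.y e k ≤ 1) ∧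
  (∀ k, ∑ e ∈ inE D (Sum.inr true), P.y e k ≤ 1) ∧
  (∀ u : υ, ∑ k, ∑ i ∈ Finset.univ.filter (fun i => D.cl i = u),
      ∑ e ∈ inE D (Sum.inl i), P.y e k = 1) ∧
  (∀ i : ι, ∀ k, ∑ e ∈ inE D (Sum.inl i), P.y e k = ∑ e ∈ outE D (Sum.inl i), P.y e k) ∧
  (∀ i : Node ι, ∀ k, D.tlo i ≤ P.t i k ∧ P.t i k ≤ D.thi i) ∧
  (∀ i : Node ι, ∀ k, P.p i k = D.pos i + (P.t i k - D.tlo i) • D.vel i) ∧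
  (∀ e ∈ edges D, ∀ k,
    P.zp e k = P.y e k • P.p e.1 k ∧
    P.zt e k = P.y e k * P.t e.1 k ∧
    P.zp' e k = P.y e k • P.p e.2 k ∧
    P.zt' e k = P.y e k * P.t e.2 k ∧
    P.l e k ≤ D.vmax * (P.zt' e k - P.zt e k) ∧
    P.lxy e k = P.zp' e k - P.zp e k ∧
    ‖P.lxy e k‖ ^ 2 ≤ P.l e k ^ 2)

/-- Objective of the nonconvex formulation. -/
def NCObj (D : MTData ι υ) (P : NCPoint ι D.m) : ℝ :=
  ∑ k, ∑ e ∈ edges D, P.l e k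

/-- A point of the MICP formulation: a single set of edge variables, together with the
integer depot flow `α` (stated as a real number required to be integral). -/
structure MICPPoint (ι : Type*) where
  y : Node ι × Node ι → ℝ
  l : Node ι × Node ι → ℝ
  lxy : Node ι × Node ι → Plane
  zp : Node ι × Node ι → Plane
  zt : Node ι × Node ι → ℝ
  zp' : Node ι × Node ι → Plane
  zt' : Node ι × Node ι → ℝ
  α : ℝ

/-- Feasibility for the MICP formulation. -/
def MICPFeas (D : MTData ι υ) (Q : MICPPoint ι) : Prop :=
  (∀ e ∈ edges D, Q.y e = 0 ∨ Q.y e = 1) ∧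
  (∀ e ∈ edges D, 0 ≤ Q.l e) ∧
  (∃ n : ℤ, Q.α = n) ∧ (1 ≤ Q.α) ∧ (Q.α ≤ (D.m : ℝ)) ∧
  (∑ e ∈ outE D (Sum.inr false), Q.y e = Q.α) ∧
  (∑ e ∈ inE D (Sum.inr true), Q.y e = Q.α) ∧
  (∀ u : υ, ∑ i ∈ Finset.univ.filter (fun i => D.cl i = u),
      ∑ e ∈ inE D (Sum.inl i), Q.y e = 1) ∧
  (∀ i : ι, ∑ e ∈ inE D (Sum.inl i), Q.y e = ∑ e ∈ outE D (Sum.inl i), Q.y e) ∧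
  (∀ i : ι, ∑ e ∈ inE D (Sum.inl i), Q.zt' e = ∑ e ∈ outE D (Sum.inl i), Q.zt e) ∧
  (∀ e ∈ edges D,
    Q.y e * D.tlo e.1 ≤ Q.zt e ∧ Q.zt e ≤ Q.y e * D.thi e.1 ∧
    Q.y e * D.tlo e.2 ≤ Q.zt' e ∧ Q.zt' e ≤ Q.y e * D.thi e.2 ∧
    Q.zp e = Q.zt e • D.vel e.1 + Q.y e • (D.pos e.1 - D.tlo e.1 • D.vel e.1) ∧
    Q.zp' e = Q.zt' e • D.vel e.2 + Q.y e • (D.pos e.2 - D.tlo e.2 • D.vel e.2) ∧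
    Q.l e ≤ D.vmax * (Q.zt' e - Q.zt e) ∧
    Q.lxy e = Q.zp' e - Q.zp e ∧
    ‖Q.lxy e‖ ^ 2 ≤ Q.l e ^ 2)

/-- Objective of the MICP formulation. -/
def MICPObj (D : MTData ι υ) (Q : MICPPoint ι) : ℝ :=
  ∑ e ∈ edges D, Q.l e

/-- The MICP point obtained from a point of the nonconvex formulation by aggregating
(summing) all edge variables over the agents, with `α` the total flow out of the
depot. -/
def aggregate (D : MTData ι υ) (P : NCPoint ι D.m) : MICPPoint ι where
  y e := ∑ k, P.y e k
  l e := ∑ k, P.l e k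
  lxy e := ∑ k, P.lxy e k
  zp e := ∑ k, P.zp e k
  zt e := ∑ k, P.zt e k
  zp' e := ∑ k, P.zp' e k
  zt' e := ∑ k, P.zt' e k
  α := ∑ k, ∑ e ∈ outE D (Sum.inr false), P.y e k

namespace MAagg

variable {ι υ : Type*} [Fintype ι] [Fintype υ]

lemma mem_edges {D : MTData ι υ} {e : Node ι × Node ι} :
    e ∈ edges D ↔ isEdge D e.1 e.2 := by
  simp [edges]

lemma mem_inE {D : MTData ι υ} {e : Node ι × Node ι} {i : Node ι} :
    e ∈ inE D i ↔ e ∈ edges D ∧ e.2 = i := by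
  simp [inE]

lemma mem_outE {D : MTData ι υ} {e : Node ι × Node ι} {i : Node ι} :
    e ∈ outE D i ↔ e ∈ edges D ∧ e.1 = i := by
  simp [outE]

lemma inE_subset {D : MTData ι υ} {i : Node ι} : inE D i ⊆ edges D :=
  Finset.filter_subset _ _

lemma outE_subset {D : MTData ι υ} {i : Node ι} : outE D i ⊆ edges D :=
  Finset.filter_subset _ _

lemma edge_cases {D : MTData ι υ} {e : Node ι × Node ι} (h : e ∈ edges D) :
    (e.1 = Sum.inr false ∧ ∃ i, e.2 = Sum.inl i) ∨
    (∃ i j, e.1 = Sum.inl i ∧ e.2 = Sum.inl j ∧ D.cl i ≠ D.cl j) ∨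
    ((∃ i, e.1 = Sum.inl i) ∧ e.2 = Sum.inr true) := by
  rw [mem_edges] at h
  rcases e with ⟨a, b⟩
  rcases a with i | _ | _ <;> rcases b with j | _ | _ <;>
    simp_all [isEdge] <;> tauto

lemma snd_ne_s {D : MTData ι υ} {e : Node ι × Node ι} (h : e ∈ edges D) :
    e.2 ≠ Sum.inr false := by
  rcases edge_cases h with ⟨_, i, h2⟩ | ⟨i, j, _, h2, _⟩ | ⟨_, h2⟩ <;> simp [h2]

lemma no_self_loop {D : MTData ι υ} {e : Node ι × Node ι} (h : e ∈ edges D) :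
    e.1 ≠ e.2 := by
  rcases edge_cases h with ⟨h1, i, h2⟩ | ⟨i, j, h1, h2, hne⟩ | ⟨⟨i, h1⟩, h2⟩ <;>
    rw [h1, h2] <;> simp
  intro hij; exact hne (by rw [hij])

lemma inE_s_empty (D : MTData ι υ) : inE D (Sum.inr false) = ∅ := by
  ext e; simp only [mem_inE, Finset.notMem_empty, iff_false, not_and]
  exact fun he => snd_ne_s he

lemma outE_s'_empty (D : MTData ι υ) : outE D (Sum.inr true) = ∅ := by
  ext e; simp only [mem_outE, Finset.notMem_empty, iff_false, not_and]
  intro he h1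
  rcases edge_cases he with ⟨h1', _⟩ | ⟨i, j, h1', _⟩ | ⟨⟨i, h1'⟩, _⟩ <;>
    rw [h1'] at h1 <;> simp_all

/-- partition of the edge sum by target node -/
lemma sum_edges_eq_sum_inE (D : MTData ι υ) (g : Node ι × Node ι → ℝ) :
    ∑ e ∈ edges D, g e = ∑ i : Node ι, ∑ e ∈ inE D i, g e := by
  rw [← Finset.sum_fiberwise (edges D) (fun e => e.2) g]
  rfl

lemma sum_edges_eq_sum_outE (D : MTData ι υ) (g : Node ι × Node ι → ℝ) :
    ∑ e ∈ edges D, g e = ∑ i : Node ι, ∑ e ∈ outE D i, g e := by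
  rw [← Finset.sum_fiberwise (edges D) (fun e => e.1) g]
  rfl

end MAagg
set_option linter.unusedSectionVars false
set_option linter.unreachableTactic false
set_option linter.unusedTactic false

namespace MAagg

section Sums

variable {β : Type*}

lemma sum_binary_mem {s : Finset β} {g : β → ℝ}
    (h : ∀ b ∈ s, g b = 0 ∨ g b = 1) (hle : ∑ b ∈ s, g b ≤ 1) :
    (∑ b ∈ s, g b) = 0 ∨ (∑ b ∈ s, g b) = 1 := by
  by_cases hz : ∀ b ∈ s, g b = 0
  · exact Or.inl (Finset.sum_eq_zero hz)
  · right
    push_neg at hz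
    obtain ⟨b, hb, hbne⟩ := hz
    have hb1 : g b = 1 := (h b hb).resolve_left hbne
    have h1 : (1 : ℝ) ≤ ∑ b ∈ s, g b := by
      rw [← hb1]
      refine Finset.single_le_sum (fun c hc => ?_) hb
      rcases h c hc with h' | h' <;> simp [h']
    linarith

lemma sum_int {s : Finset β} {g : β → ℝ}
    (h : ∀ b ∈ s, ∃ n : ℤ, g b = n) : ∃ n : ℤ, ∑ b ∈ s, g b = n := by
  classical
  induction s using Finset.cons_induction with
  | empty => exact ⟨0, by simp⟩
  | cons a s ha ih =>
    obtain ⟨n, hn⟩ := ih (fun b hb => h b (Finset.mem_cons_of_mem hb))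
    obtain ⟨p, hp⟩ := h a (Finset.mem_cons_self a s)
    exact ⟨p + n, by rw [Finset.sum_cons, hn, hp]; push_cast; ring⟩

lemma sum_binary_nonneg {s : Finset β} {g : β → ℝ}
    (h : ∀ b ∈ s, g b = 0 ∨ g b = 1) : ∀ b ∈ s, 0 ≤ g b := by
  intro b hb; rcases h b hb with h' | h' <;> simp [h']

end Sums

variable {ι υ : Type*} [Fintype ι] [Fintype υ]

/-- Part 1: aggregation preserves feasibility and the objective. -/
lemma aggregate_main (D : MTData ι υ) (P : NCPoint ι D.m) (hP : NCFeas D P)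
    (hflow : 1 ≤ ∑ k, ∑ e ∈ outE D (Sum.inr false), P.y e k) :
    MICPFeas D (aggregate D P) ∧ MICPObj D (aggregate D P) = NCObj D P := by
  obtain ⟨h0, h1, h2, h3, h4, h5, h6, h7, h8⟩ := hP
  have hyn : ∀ e ∈ edges D, ∀ k, 0 ≤ P.y e k := by
    intro e he k; rcases h0 e he k with h' | h' <;> simp [h']
  -- total in-flow into any segment node is at most 1
  have key1 : ∀ j : ι, ∑ k, ∑ e ∈ inE D (Sum.inl j), P.y e k ≤ 1 := by
    intro j
    have := h4 (D.cl j)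
    calc ∑ k, ∑ e ∈ inE D (Sum.inl j), P.y e k
        ≤ ∑ k, ∑ i ∈ Finset.univ.filter (fun i => D.cl i = D.cl j),
            ∑ e ∈ inE D (Sum.inl i), P.y e k := by
          refine Finset.sum_le_sum fun k _ => ?_
          refine Finset.single_le_sum (f := fun i => ∑ e ∈ inE D (Sum.inl i), P.y e k)
            (fun i _ => ?_) (Finset.mem_filter.mpr ⟨Finset.mem_univ _, rfl⟩)
          exact Finset.sum_nonneg fun e he => hyn e (inE_subset he) k
      _ = 1 := h4 (D.cl j)
  have key2 : ∀ e ∈ edges D, ∑ k, P.y e k ≤ 1 := by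
    intro e he
    rcases edge_cases he with ⟨h1', j, h2'⟩ | ⟨i, j, h1', h2', _⟩ | ⟨⟨i, h1'⟩, h2'⟩
    · -- e goes from s to a segment node j
      calc ∑ k, P.y e k ≤ ∑ k, ∑ e' ∈ inE D (Sum.inl j), P.y e' k := by
            refine Finset.sum_le_sum fun k _ => ?_
            refine Finset.single_le_sum (fun e' he' => hyn e' (inE_subset he') k) ?_
            rw [mem_inE]; exact ⟨he, h2'⟩
        _ ≤ 1 := key1 j
    · calc ∑ k, P.y e k ≤ ∑ k, ∑ e' ∈ inE D (Sum.inl j), P.y e' k := by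
            refine Finset.sum_le_sum fun k _ => ?_
            refine Finset.single_le_sum (fun e' he' => hyn e' (inE_subset he') k) ?_
            rw [mem_inE]; exact ⟨he, h2'⟩
        _ ≤ 1 := key1 j
    · -- e goes from segment node i to s'
      calc ∑ k, P.y e k ≤ ∑ k, ∑ e' ∈ outE D (Sum.inl i), P.y e' k := by
            refine Finset.sum_le_sum fun k _ => ?_
            refine Finset.single_le_sum (fun e' he' => hyn e' (outE_subset he') k) ?_
            rw [mem_outE]; exact ⟨he, h1'⟩
        _ = ∑ k, ∑ e' ∈ inE D (Sum.inl i), P.y e' k := by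
            exact Finset.sum_congr rfl fun k _ => (h5 i k).symm
        _ ≤ 1 := key1 i
  -- flow conservation s → s' per agent
  have hglob : ∀ k, ∑ e ∈ inE D (Sum.inr true), P.y e k
      = ∑ e ∈ outE D (Sum.inr false), P.y e k := by
    intro k
    have hin := sum_edges_eq_sum_inE D (fun e => P.y e k)
    have hout := sum_edges_eq_sum_outE D (fun e => P.y e k)
    rw [Fintype.sum_sum_type] at hin hout
    rw [Fintype.sum_bool] at hin hout
    rw [inE_s_empty] at hin
    rw [outE_s'_empty] at hout
    simp only [Finset.sum_empty] at hin hout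
    have hseg : ∑ i : ι, ∑ e ∈ inE D (Sum.inl i), P.y e k
        = ∑ i : ι, ∑ e ∈ outE D (Sum.inl i), P.y e k :=
      Finset.sum_congr rfl fun i _ => h5 i k
    rw [hin] at hout
    linarith [hout, hseg]
  constructor
  · refine ⟨?_, ?_, ?_, ?_, ?_, ?_, ?_, ?_, ?_, ?_, ?_⟩
    · -- binary
      intro e he
      exact sum_binary_mem (fun k _ => h0 e he k) (key2 e he)
    · intro e he
      show 0 ≤ ∑ k, P.l e k
      exact Finset.sum_nonneg fun k _ => h1 e he k
    · show ∃ n : ℤ, ∑ k, ∑ e ∈ outE D (Sum.inr false), P.y e k = (n : ℝ)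
      refine sum_int fun k _ => sum_int fun e he => ?_
      rcases h0 e (outE_subset he) k with h' | h'
      · exact ⟨0, by simp [h']⟩
      · exact ⟨1, by simp [h']⟩
    · exact hflow
    · show ∑ k, ∑ e ∈ outE D (Sum.inr false), P.y e k ≤ (D.m : ℝ)
      calc ∑ k, ∑ e ∈ outE D (Sum.inr false), P.y e k ≤ ∑ _k : Fin D.m, (1:ℝ) :=
            Finset.sum_le_sum fun k _ => h2 k
        _ = D.m := by simp
    · show ∑ e ∈ outE D (Sum.inr false), ∑ k, P.y e k = ∑ k, ∑ e ∈ outE D (Sum.inr false), P.y e k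
      exact Finset.sum_comm
    · show ∑ e ∈ inE D (Sum.inr true), ∑ k, P.y e k = _
      rw [Finset.sum_comm]
      exact Finset.sum_congr rfl fun k _ => hglob k
    · intro u
      show ∑ i ∈ Finset.univ.filter (fun i => D.cl i = u),
          ∑ e ∈ inE D (Sum.inl i), ∑ k, P.y e k = 1
      rw [← h4 u, Finset.sum_comm]
      exact Finset.sum_congr rfl fun i _ => Finset.sum_comm
    · intro i
      show ∑ e ∈ inE D (Sum.inl i), ∑ k, P.y e k = ∑ e ∈ outE D (Sum.inl i), ∑ k, P.y e k
      rw [Finset.sum_comm (s := inE D (Sum.inl i)), Finset.sum_comm (s := outE D (Sum.inl i))]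
      exact Finset.sum_congr rfl fun k _ => h5 i k
    · intro i
      show ∑ e ∈ inE D (Sum.inl i), ∑ k, P.zt' e k = ∑ e ∈ outE D (Sum.inl i), ∑ k, P.zt e k
      rw [Finset.sum_comm (s := inE D (Sum.inl i)), Finset.sum_comm (s := outE D (Sum.inl i))]
      refine Finset.sum_congr rfl fun k _ => ?_
      calc ∑ e ∈ inE D (Sum.inl i), P.zt' e k
          = ∑ e ∈ inE D (Sum.inl i), P.y e k * P.t (Sum.inl i) k := by
            refine Finset.sum_congr rfl fun e he => ?_
            rw [(h8 e (inE_subset he) k).2.2.2.1, (mem_inE.mp he).2]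
        _ = (∑ e ∈ inE D (Sum.inl i), P.y e k) * P.t (Sum.inl i) k := by
            rw [Finset.sum_mul]
        _ = (∑ e ∈ outE D (Sum.inl i), P.y e k) * P.t (Sum.inl i) k := by rw [h5 i k]
        _ = ∑ e ∈ outE D (Sum.inl i), P.y e k * P.t (Sum.inl i) k := by
            rw [Finset.sum_mul]
        _ = ∑ e ∈ outE D (Sum.inl i), P.zt e k := by
            refine Finset.sum_congr rfl fun e he => ?_
            rw [(h8 e (outE_subset he) k).2.1, (mem_outE.mp he).2]
    · intro e he
      have H := fun k => h8 e he k
      have hlt : ∀ k, D.tlo e.1 ≤ P.t e.1 k ∧ P.t e.1 k ≤ D.thi e.1 := fun k => h6 e.1 k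
      have hlt2 : ∀ k, D.tlo e.2 ≤ P.t e.2 k ∧ P.t e.2 k ≤ D.thi e.2 := fun k => h6 e.2 k
      have hyk := fun k => hyn e he k
      refine ⟨?_, ?_, ?_, ?_, ?_, ?_, ?_, ?_, ?_⟩
      · show (∑ k, P.y e k) * D.tlo e.1 ≤ ∑ k, P.zt e k
        rw [Finset.sum_mul]
        refine Finset.sum_le_sum fun k _ => ?_
        rw [(H k).2.1]
        exact mul_le_mul_of_nonneg_left (hlt k).1 (hyk k)
      · show (∑ k, P.zt e k) ≤ (∑ k, P.y e k) * D.thi e.1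
        rw [Finset.sum_mul]
        refine Finset.sum_le_sum fun k _ => ?_
        rw [(H k).2.1]
        exact mul_le_mul_of_nonneg_left (hlt k).2 (hyk k)
      · show (∑ k, P.y e k) * D.tlo e.2 ≤ ∑ k, P.zt' e k
        rw [Finset.sum_mul]
        refine Finset.sum_le_sum fun k _ => ?_
        rw [(H k).2.2.2.1]
        exact mul_le_mul_of_nonneg_left (hlt2 k).1 (hyk k)
      · show (∑ k, P.zt' e k) ≤ (∑ k, P.y e k) * D.thi e.2
        rw [Finset.sum_mul]
        refine Finset.sum_le_sum fun k _ => ?_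
        rw [(H k).2.2.2.1]
        exact mul_le_mul_of_nonneg_left (hlt2 k).2 (hyk k)
      · show (∑ k, P.zp e k) = (∑ k, P.zt e k) • D.vel e.1
            + (∑ k, P.y e k) • (D.pos e.1 - D.tlo e.1 • D.vel e.1)
        rw [Finset.sum_smul, Finset.sum_smul, ← Finset.sum_add_distrib]
        refine Finset.sum_congr rfl fun k _ => ?_
        rw [(H k).1, (H k).2.1, h7 e.1 k]
        module
      · show (∑ k, P.zp' e k) = (∑ k, P.zt' e k) • D.vel e.2
            + (∑ k, P.y e k) • (D.pos e.2 - D.tlo e.2 • D.vel e.2)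
        rw [Finset.sum_smul, Finset.sum_smul, ← Finset.sum_add_distrib]
        refine Finset.sum_congr rfl fun k _ => ?_
        rw [(H k).2.2.1, (H k).2.2.2.1, h7 e.2 k]
        module
      · show (∑ k, P.l e k) ≤ D.vmax * ((∑ k, P.zt' e k) - ∑ k, P.zt e k)
        rw [← Finset.sum_sub_distrib, Finset.mul_sum]
        exact Finset.sum_le_sum fun k _ => (H k).2.2.2.2.1
      · show (∑ k, P.lxy e k) = (∑ k, P.zp' e k) - ∑ k, P.zp e k
        rw [← Finset.sum_sub_distrib]
        exact Finset.sum_congr rfl fun k _ => (H k).2.2.2.2.2.1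
      · show ‖∑ k, P.lxy e k‖ ^ 2 ≤ (∑ k, P.l e k) ^ 2
        have hk : ∀ k, ‖P.lxy e k‖ ≤ P.l e k := by
          intro k
          have h' := (H k).2.2.2.2.2.2
          nlinarith [norm_nonneg (P.lxy e k), h1 e he k]
        calc ‖∑ k, P.lxy e k‖ ^ 2 ≤ (∑ k, ‖P.lxy e k‖) ^ 2 := by
              have := norm_sum_le Finset.univ (fun k => P.lxy e k)
              exact pow_le_pow_left₀ (norm_nonneg _) this 2
          _ ≤ (∑ k, P.l e k) ^ 2 := by
              have hs : (∑ k, ‖P.lxy e k‖) ≤ ∑ k, P.l e k :=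
                Finset.sum_le_sum fun k _ => hk k
              exact pow_le_pow_left₀ (Finset.sum_nonneg fun k _ => norm_nonneg _) hs 2
  · show ∑ e ∈ edges D, ∑ k, P.l e k = ∑ k, ∑ e ∈ edges D, P.l e k
    exact Finset.sum_comm

end MAagg
namespace MAagg

variable {ι υ : Type*} [Fintype ι] [Fintype υ]

/-- Support of the MICP point: edges with `y = 1`. -/
def Sset (D : MTData ι υ) (Q : MICPPoint ι) : Finset (Node ι × Node ι) :=
  (edges D).filter (fun e => Q.y e = 1)

lemma mem_Sset {D : MTData ι υ} {Q : MICPPoint ι} {e : Node ι × Node ι} :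
    e ∈ Sset D Q ↔ e ∈ edges D ∧ Q.y e = 1 := Finset.mem_filter

lemma Sset_subset {D : MTData ι υ} {Q : MICPPoint ι} : Sset D Q ⊆ edges D :=
  Finset.filter_subset _ _

lemma y_zero_of_notMem {D : MTData ι υ} {Q : MICPPoint ι} (hQ : MICPFeas D Q)
    {e : Node ι × Node ι} (he : e ∈ edges D) (hn : e ∉ Sset D Q) : Q.y e = 0 := by
  rcases hQ.1 e he with h | h
  · exact h
  · exact absurd (mem_Sset.mpr ⟨he, h⟩) hn

lemma vanish_of_notMem {D : MTData ι υ} {Q : MICPPoint ι} (hQ : MICPFeas D Q)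
    {e : Node ι × Node ι} (he : e ∈ edges D) (hn : e ∉ Sset D Q) :
    Q.zt e = 0 ∧ Q.zt' e = 0 ∧ Q.zp e = 0 ∧ Q.zp' e = 0 ∧ Q.l e = 0 ∧ Q.lxy e = 0 := by
  have hy0 := y_zero_of_notMem hQ he hn
  obtain ⟨-, hl, -, -, -, -, -, -, -, -, hedge⟩ := hQ
  obtain ⟨e1, e2, e3, e4, e5, e6, e7, e8, e9⟩ := hedge e he
  rw [hy0] at e1 e2 e3 e4 e5 e6
  simp only [zero_mul] at e1 e2 e3 e4
  have hzt : Q.zt e = 0 := le_antisymm e2 e1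
  have hzt' : Q.zt' e = 0 := le_antisymm e4 e3
  have hzp : Q.zp e = 0 := by rw [e5, hzt]; simp
  have hzp' : Q.zp' e = 0 := by rw [e6, hzt']; simp
  have hle : Q.l e = 0 := by
    have := hl e he
    rw [hzt, hzt'] at e7
    simp only [sub_zero, mul_zero] at e7
    linarith
  have hlxy : Q.lxy e = 0 := by rw [e8, hzp, hzp']; simp
  exact ⟨hzt, hzt', hzp, hzp', hle, hlxy⟩

lemma sum_binary_card {β : Type*} {s : Finset β} {g : β → ℝ}
    (h : ∀ b ∈ s, g b = 0 ∨ g b = 1) :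
    ∑ b ∈ s, g b = ((s.filter (fun b => g b = 1)).card : ℝ) := by
  classical
  rw [← Finset.sum_boole]
  refine Finset.sum_congr rfl fun b hb => ?_
  rcases h b hb with h' | h' <;> simp [h']

lemma filter_inE_eq {D : MTData ι υ} {Q : MICPPoint ι} (i : Node ι) :
    (inE D i).filter (fun e => Q.y e = 1) = (Sset D Q).filter (fun e => e.2 = i) := by
  ext e
  simp only [Finset.mem_filter, mem_inE, mem_Sset]
  tauto

lemma filter_outE_eq {D : MTData ι υ} {Q : MICPPoint ι} (i : Node ι) :
    (outE D i).filter (fun e => Q.y e = 1) = (Sset D Q).filter (fun e => e.1 = i) := by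
  ext e
  simp only [Finset.mem_filter, mem_outE, mem_Sset]
  tauto

lemma y_nonneg_edges {D : MTData ι υ} {Q : MICPPoint ι} (hQ : MICPFeas D Q) :
    ∀ e ∈ edges D, 0 ≤ Q.y e := by
  intro e he; rcases hQ.1 e he with h | h <;> simp [h]

/-- at most one `S`-edge enters a given segment node -/
lemma cardIn_le_one {D : MTData ι υ} {Q : MICPPoint ι} (hQ : MICPFeas D Q) (i : ι) :
    ((Sset D Q).filter (fun e => e.2 = Sum.inl i)).card ≤ 1 := by
  have hsum : ∑ e ∈ inE D (Sum.inl i), Q.y e ≤ 1 := by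
    have hclu := hQ.2.2.2.2.2.2.2.1 (D.cl i)
    calc ∑ e ∈ inE D (Sum.inl i), Q.y e
        ≤ ∑ j ∈ Finset.univ.filter (fun j => D.cl j = D.cl i),
            ∑ e ∈ inE D (Sum.inl j), Q.y e := by
          refine Finset.single_le_sum (f := fun j => ∑ e ∈ inE D (Sum.inl j), Q.y e)
            (fun j _ => Finset.sum_nonneg fun e he => y_nonneg_edges hQ e (inE_subset he))
            (Finset.mem_filter.mpr ⟨Finset.mem_univ _, rfl⟩)
      _ = 1 := hclu
  rw [sum_binary_card (fun e he => hQ.1 e (inE_subset he)), filter_inE_eq] at hsum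
  exact_mod_cast hsum

/-- in-degree equals out-degree at segment nodes (within `S`) -/
lemma cardIn_eq_cardOut {D : MTData ι υ} {Q : MICPPoint ι} (hQ : MICPFeas D Q) (i : ι) :
    ((Sset D Q).filter (fun e => e.2 = Sum.inl i)).card
      = ((Sset D Q).filter (fun e => e.1 = Sum.inl i)).card := by
  have hcons := hQ.2.2.2.2.2.2.2.2.1 i
  rw [sum_binary_card (fun e he => hQ.1 e (inE_subset he)),
      sum_binary_card (fun e he => hQ.1 e (outE_subset he)),
      filter_inE_eq, filter_outE_eq] at hcons
  exact_mod_cast hcons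

lemma uniqIn {D : MTData ι υ} {Q : MICPPoint ι} (hQ : MICPFeas D Q) {i : ι}
    {p p' : Node ι × Node ι} (hp : p ∈ Sset D Q) (hp' : p' ∈ Sset D Q)
    (h2 : p.2 = Sum.inl i) (h2' : p'.2 = Sum.inl i) : p = p' := by
  have hc := cardIn_le_one hQ i
  have := Finset.card_le_one.mp hc p (Finset.mem_filter.mpr ⟨hp, h2⟩)
    p' (Finset.mem_filter.mpr ⟨hp', h2'⟩)
  exact this

lemma uniqOut {D : MTData ι υ} {Q : MICPPoint ι} (hQ : MICPFeas D Q) {i : ι}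
    {p p' : Node ι × Node ι} (hp : p ∈ Sset D Q) (hp' : p' ∈ Sset D Q)
    (h1 : p.1 = Sum.inl i) (h1' : p'.1 = Sum.inl i) : p = p' := by
  have hc : ((Sset D Q).filter (fun e => e.1 = Sum.inl i)).card ≤ 1 := by
    rw [← cardIn_eq_cardOut hQ]; exact cardIn_le_one hQ i
  exact Finset.card_le_one.mp hc p (Finset.mem_filter.mpr ⟨hp, h1⟩)
    p' (Finset.mem_filter.mpr ⟨hp', h1'⟩)

lemma exIn {D : MTData ι υ} {Q : MICPPoint ι} (hQ : MICPFeas D Q) {i : ι}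
    {x : Node ι × Node ι} (hx : x ∈ Sset D Q) (h1 : x.1 = Sum.inl i) :
    ∃ p ∈ Sset D Q, p.2 = Sum.inl i := by
  have hpos : 0 < ((Sset D Q).filter (fun e => e.1 = Sum.inl i)).card :=
    Finset.card_pos.mpr ⟨x, Finset.mem_filter.mpr ⟨hx, h1⟩⟩
  rw [← cardIn_eq_cardOut hQ] at hpos
  obtain ⟨p, hp⟩ := Finset.card_pos.mp hpos
  exact ⟨p, (Finset.mem_filter.mp hp).1, (Finset.mem_filter.mp hp).2⟩

lemma exOut {D : MTData ι υ} {Q : MICPPoint ι} (hQ : MICPFeas D Q) {i : ι}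
    {x : Node ι × Node ι} (hx : x ∈ Sset D Q) (h2 : x.2 = Sum.inl i) :
    ∃ p ∈ Sset D Q, p.1 = Sum.inl i := by
  have hpos : 0 < ((Sset D Q).filter (fun e => e.2 = Sum.inl i)).card :=
    Finset.card_pos.mpr ⟨x, Finset.mem_filter.mpr ⟨hx, h2⟩⟩
  rw [cardIn_eq_cardOut hQ] at hpos
  obtain ⟨p, hp⟩ := Finset.card_pos.mp hpos
  exact ⟨p, (Finset.mem_filter.mp hp).1, (Finset.mem_filter.mp hp).2⟩

end MAagg
namespace MAagg

variable {ι υ : Type*} [Fintype ι] [Fintype υ]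

/-- the (unique) `S`-predecessor of an edge -/
noncomputable def prevE (D : MTData ι υ) (Q : MICPPoint ι) (x : Node ι × Node ι) :
    Node ι × Node ι :=
  if h : ∃ p ∈ Sset D Q, p.2 = x.1 then h.choose else x

/-- the (unique) `S`-successor of an edge -/
noncomputable def nxtE (D : MTData ι υ) (Q : MICPPoint ι) (x : Node ι × Node ι) :
    Node ι × Node ι :=
  if h : ∃ p ∈ Sset D Q, p.1 = x.2 then h.choose else x

lemma prevE_spec {D : MTData ι υ} {Q : MICPPoint ι} {x : Node ι × Node ι}
    (h : ∃ p ∈ Sset D Q, p.2 = x.1) :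
    prevE D Q x ∈ Sset D Q ∧ (prevE D Q x).2 = x.1 := by
  rw [prevE, dif_pos h]; exact ⟨h.choose_spec.1, h.choose_spec.2⟩

lemma prevE_eq_of_src_s {D : MTData ι υ} {Q : MICPPoint ι} {x : Node ι × Node ι}
    (h1 : x.1 = Sum.inr false) : prevE D Q x = x := by
  rw [prevE, dif_neg]
  rintro ⟨p, hp, hp2⟩
  exact snd_ne_s (Sset_subset hp) (by rw [hp2, h1])

lemma src_cases {D : MTData ι υ} {Q : MICPPoint ι} {x : Node ι × Node ι}
    (hx : x ∈ Sset D Q) : x.1 = Sum.inr false ∨ ∃ i, x.1 = Sum.inl i := by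
  rcases edge_cases (Sset_subset hx) with ⟨h1, -⟩ | ⟨i, j, h1, -, -⟩ | ⟨⟨i, h1⟩, -⟩
  · exact Or.inl h1
  · exact Or.inr ⟨i, h1⟩
  · exact Or.inr ⟨i, h1⟩

lemma prevE_spec_of_seg {D : MTData ι υ} {Q : MICPPoint ι} (hQ : MICPFeas D Q)
    {x : Node ι × Node ι} (hx : x ∈ Sset D Q) {i : ι} (h1 : x.1 = Sum.inl i) :
    prevE D Q x ∈ Sset D Q ∧ (prevE D Q x).2 = x.1 := by
  refine prevE_spec ?_
  obtain ⟨p, hp, hp2⟩ := exIn hQ hx h1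
  exact ⟨p, hp, by rw [hp2, h1]⟩

lemma prevE_mem {D : MTData ι υ} {Q : MICPPoint ι} (hQ : MICPFeas D Q)
    {x : Node ι × Node ι} (hx : x ∈ Sset D Q) : prevE D Q x ∈ Sset D Q := by
  rcases src_cases hx with h1 | ⟨i, h1⟩
  · rw [prevE_eq_of_src_s h1]; exact hx
  · exact (prevE_spec_of_seg hQ hx h1).1

lemma prevE_fix_iff {D : MTData ι υ} {Q : MICPPoint ι} (hQ : MICPFeas D Q)
    {x : Node ι × Node ι} (hx : x ∈ Sset D Q) :
    prevE D Q x = x ↔ x.1 = Sum.inr false := by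
  constructor
  · intro h
    rcases src_cases hx with h1 | ⟨i, h1⟩
    · exact h1
    · have := (prevE_spec_of_seg hQ hx h1).2
      rw [h] at this
      exact absurd this.symm (no_self_loop (Sset_subset hx))
  · exact prevE_eq_of_src_s

lemma prevE_inj {D : MTData ι υ} {Q : MICPPoint ι} (hQ : MICPFeas D Q)
    {x x' : Node ι × Node ι} (hx : x ∈ Sset D Q) (hx' : x' ∈ Sset D Q)
    (h1 : x.1 ≠ Sum.inr false) (h1' : x'.1 ≠ Sum.inr false)
    (heq : prevE D Q x = prevE D Q x') : x = x' := by
  obtain ⟨i, hi⟩ := (src_cases hx).resolve_left h1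
  obtain ⟨i', hi'⟩ := (src_cases hx').resolve_left h1'
  have hs := prevE_spec_of_seg hQ hx hi
  have hs' := prevE_spec_of_seg hQ hx' hi'
  have h11 : x.1 = x'.1 := by rw [← hs.2, ← hs'.2, heq]
  rw [hi] at h11
  exact uniqOut hQ hx hx' hi h11.symm

lemma nxtE_prevE {D : MTData ι υ} {Q : MICPPoint ι} (hQ : MICPFeas D Q)
    {x : Node ι × Node ι} (hx : x ∈ Sset D Q) {i : ι} (h1 : x.1 = Sum.inl i) :
    nxtE D Q (prevE D Q x) = x := by
  have hs := prevE_spec_of_seg hQ hx h1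
  have hex : ∃ p ∈ Sset D Q, p.1 = (prevE D Q x).2 := ⟨x, hx, by rw [hs.2]⟩
  rw [nxtE, dif_pos hex]
  have hc := hex.choose_spec
  refine uniqOut hQ hc.1 hx ?_ h1
  rw [hc.2, hs.2, h1]

lemma nxtE_fix_of_s' {D : MTData ι υ} {Q : MICPPoint ι} {x : Node ι × Node ι}
    (h2 : x.2 = Sum.inr true) : nxtE D Q x = x := by
  rw [nxtE, dif_neg]
  rintro ⟨p, hp, hp1⟩
  rcases edge_cases (Sset_subset hp) with ⟨h1', -⟩ | ⟨i, j, h1', -, -⟩ | ⟨⟨i, h1'⟩, -⟩ <;>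
    rw [h1'] at hp1 <;> rw [h2] at hp1 <;> simp_all

/-- iterates of `prevE` stay in `S` -/
lemma iter_mem {D : MTData ι υ} {Q : MICPPoint ι} (hQ : MICPFeas D Q)
    {x : Node ι × Node ι} (hx : x ∈ Sset D Q) (j : ℕ) :
    (prevE D Q)^[j] x ∈ Sset D Q := by
  induction j with
  | zero => exact hx
  | succ j ih => rw [Function.iterate_succ_apply']; exact prevE_mem hQ ih

/-- once the orbit hits an edge leaving the depot, it stays there -/
lemma iter_stab {D : MTData ι υ} {Q : MICPPoint ι} (hQ : MICPFeas D Q)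
    {x : Node ι × Node ι} (hx : x ∈ Sset D Q) {a : ℕ}
    (ha : ((prevE D Q)^[a] x).1 = Sum.inr false) :
    ∀ b, a ≤ b → (prevE D Q)^[b] x = (prevE D Q)^[a] x := by
  intro b hb
  induction b with
  | zero => rw [Nat.le_zero.mp hb]
  | succ b ih =>
    rcases Nat.lt_or_ge a (b+1) with h | h
    · have hab : a ≤ b := Nat.lt_succ_iff.mp h
      rw [Function.iterate_succ_apply', ih hab]
      exact prevE_eq_of_src_s ha
    · rw [Nat.le_antisymm hb h]

end MAagg
namespace MAagg

variable {ι υ : Type*} [Fintype ι] [Fintype υ]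

/-- the origin of an edge: iterate `prevE` (#S) times -/
noncomputable def origE (D : MTData ι υ) (Q : MICPPoint ι) (x : Node ι × Node ι) :
    Node ι × Node ι :=
  (prevE D Q)^[(Sset D Q).card] x

/-- Dichotomy: the backward orbit either reaches the depot within #S steps and
stabilizes, or never reaches it. -/
lemma stabN {D : MTData ι υ} {Q : MICPPoint ι} (hQ : MICPFeas D Q)
    {x : Node ι × Node ι} (hx : x ∈ Sset D Q) :
    (origE D Q x).1 = Sum.inr false ∨
      ∀ j, ((prevE D Q)^[j] x).1 ≠ Sum.inr false := by
  by_cases hex : ∃ j, ((prevE D Q)^[j] x).1 = Sum.inr false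
  · left
    classical
    have hspec : ((prevE D Q)^[Nat.find hex] x).1 = Sum.inr false := Nat.find_spec hex
    have hkey : ∀ a b, a < b → b ≤ Nat.find hex →
        (prevE D Q)^[a] x = (prevE D Q)^[b] x → False := by
      intro a b hab hbj heq
      have h1 : (prevE D Q)^[Nat.find hex] x = (prevE D Q)^[(Nat.find hex - b) + a] x := by
        calc (prevE D Q)^[Nat.find hex] x
            = (prevE D Q)^[(Nat.find hex - b) + b] x := by congr 1; omega
          _ = (prevE D Q)^[Nat.find hex - b] ((prevE D Q)^[b] x) :=
              Function.iterate_add_apply _ _ _ _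
          _ = (prevE D Q)^[Nat.find hex - b] ((prevE D Q)^[a] x) := by rw [heq]
          _ = (prevE D Q)^[(Nat.find hex - b) + a] x :=
              (Function.iterate_add_apply _ _ _ _).symm
      have hlt : (Nat.find hex - b) + a < Nat.find hex := by omega
      have := Nat.find_min hex hlt
      rw [← h1] at this
      exact this hspec
    have hinj : Set.InjOn (fun j => (prevE D Q)^[j] x)
        (Finset.range (Nat.find hex + 1)) := by
      intro a ha b hb heq
      simp only [Finset.coe_range, Set.mem_Iio] at ha hb
      by_contra hne
      rcases lt_or_gt_of_ne hne with h | h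
      · exact hkey a b h (by omega) heq
      · exact hkey b a h (by omega) heq.symm
    have hmaps : ∀ j ∈ Finset.range (Nat.find hex + 1),
        (prevE D Q)^[j] x ∈ Sset D Q := fun j _ => iter_mem hQ hx j
    have hcard := Finset.card_le_card_of_injOn (fun j => (prevE D Q)^[j] x) hmaps hinj
    rw [Finset.card_range] at hcard
    have hj₀N : Nat.find hex ≤ (Sset D Q).card := by omega
    have := iter_stab hQ hx hspec (Sset D Q).card hj₀N
    rw [origE, this]
    exact hspec
  · right
    push_neg at hex
    exact hex

lemma origE_mem {D : MTData ι υ} {Q : MICPPoint ι} (hQ : MICPFeas D Q)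
    {x : Node ι × Node ι} (hx : x ∈ Sset D Q) : origE D Q x ∈ Sset D Q :=
  iter_mem hQ hx _

lemma origE_prevE {D : MTData ι υ} {Q : MICPPoint ι} (hQ : MICPFeas D Q)
    {x : Node ι × Node ι} (hx : x ∈ Sset D Q) {i : ι} (h1 : x.1 = Sum.inl i) :
    origE D Q (prevE D Q x) = origE D Q x ∨
      ((origE D Q (prevE D Q x)).1 ≠ Sum.inr false ∧
        (origE D Q x).1 ≠ Sum.inr false) := by
  have horigp : origE D Q (prevE D Q x)
      = (prevE D Q)^[(Sset D Q).card + 1] x :=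
    (Function.iterate_succ_apply _ _ _).symm
  rcases stabN hQ hx with h | h
  · left
    rw [horigp, Function.iterate_succ_apply']
    show prevE D Q (origE D Q x) = origE D Q x
    exact prevE_eq_of_src_s h
  · right
    constructor
    · rw [horigp]; exact h ((Sset D Q).card + 1)
    · exact h (Sset D Q).card

/-- an edge entering the depot copy has its origin at the depot -/
lemma s'_orig {D : MTData ι υ} {Q : MICPPoint ι} (hQ : MICPFeas D Q)
    {x : Node ι × Node ι} (hx : x ∈ Sset D Q) (h2 : x.2 = Sum.inr true) :
    (origE D Q x).1 = Sum.inr false := by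
  rcases stabN hQ hx with h | hnever
  · exact h
  · exfalso
    have hmaps : ∀ j ∈ Finset.range ((Sset D Q).card + 1),
        (prevE D Q)^[j] x ∈ Sset D Q := fun j _ => iter_mem hQ hx j
    have hlt : (Sset D Q).card < (Finset.range ((Sset D Q).card + 1)).card := by
      rw [Finset.card_range]; omega
    obtain ⟨a, ha, b, hb, hne, heq⟩ :=
      Finset.exists_ne_map_eq_of_card_lt_of_maps_to hlt hmaps
    simp only [Finset.mem_range] at ha hb
    have hkey : ∀ a b, a < b → (prevE D Q)^[a] x = (prevE D Q)^[b] x → False := by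
      intro a b hab heq
      have hback : ∀ t, t ≤ a → (prevE D Q)^[a - t] x = (prevE D Q)^[b - t] x := by
        intro t
        induction t with
        | zero => intro _; simpa using heq
        | succ t ih =>
          intro hta
          have hprev := ih (by omega)
          have ha1 : a - t = (a - (t+1)) + 1 := by omega
          have hb1 : b - t = (b - (t+1)) + 1 := by omega
          rw [ha1, hb1, Function.iterate_succ_apply', Function.iterate_succ_apply']
            at hprev
          exact prevE_inj hQ (iter_mem hQ hx _) (iter_mem hQ hx _)
            (hnever _) (hnever _) hprev
      have hxx : x = (prevE D Q)^[b - a] x := by simpa using hback a le_rfl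
      have hba : 1 ≤ b - a := by omega
      have h1 : b - a = (b - a - 1) + 1 := by omega
      rw [h1, Function.iterate_succ_apply'] at hxx
      have hyS : (prevE D Q)^[b - a - 1] x ∈ Sset D Q := iter_mem hQ hx _
      rcases src_cases hyS with hy1 | ⟨i, hy1⟩
      · rw [prevE_eq_of_src_s hy1] at hxx
        exact hnever 0 (by rw [Function.iterate_zero_apply, hxx]; exact hy1)
      · have := (prevE_spec_of_seg hQ hyS hy1).2
        rw [← hxx] at this
        rw [h2] at this
        simp [hy1] at this
    rcases lt_or_gt_of_ne hne with h | h
    · exact hkey a b h heq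
    · exact hkey b a h heq.symm

/-- every edge is reached from its origin by forward steps -/
lemma back_nxt {D : MTData ι υ} {Q : MICPPoint ι} (hQ : MICPFeas D Q) :
    ∀ j, ∀ x ∈ Sset D Q, ∃ c, x = (nxtE D Q)^[c] ((prevE D Q)^[j] x) := by
  intro j
  induction j with
  | zero => exact fun x _ => ⟨0, rfl⟩
  | succ j ih =>
    intro x hx
    rcases src_cases hx with h1 | ⟨i, h1⟩
    · have hfix : prevE D Q x = x := prevE_eq_of_src_s h1
      have hiter : (prevE D Q)^[j+1] x = x := by
        rw [Function.iterate_succ_apply, hfix]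
        exact Function.iterate_fixed hfix j
      exact ⟨0, by rw [hiter]; rfl⟩
    · obtain ⟨c, hc⟩ := ih (prevE D Q x) (prevE_mem hQ hx)
      refine ⟨c + 1, ?_⟩
      rw [Function.iterate_succ_apply' (nxtE D Q) c,
        Function.iterate_succ_apply (prevE D Q) j x, ← hc]
      exact (nxtE_prevE hQ hx h1).symm

/-- two edges into the depot copy with the same origin coincide -/
lemma merge_s' {D : MTData ι υ} {Q : MICPPoint ι} (hQ : MICPFeas D Q)
    {x x' : Node ι × Node ι} (hx : x ∈ Sset D Q) (hx' : x' ∈ Sset D Q)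
    (h2 : x.2 = Sum.inr true) (h2' : x'.2 = Sum.inr true)
    (ho : origE D Q x = origE D Q x') : x = x' := by
  obtain ⟨c, hc⟩ := back_nxt hQ (Sset D Q).card x hx
  obtain ⟨c', hc'⟩ := back_nxt hQ (Sset D Q).card x' hx'
  rw [show (prevE D Q)^[(Sset D Q).card] x = origE D Q x from rfl] at hc
  rw [show (prevE D Q)^[(Sset D Q).card] x' = origE D Q x' from rfl, ← ho] at hc'
  have key : ∀ (z w : Node ι × Node ι) (c c' : ℕ), c ≤ c' →
      z = (nxtE D Q)^[c] w → z.2 = Sum.inr true →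
      (nxtE D Q)^[c'] w = z := by
    intro z w c c' hcc hz hz2
    have hsplit : (nxtE D Q)^[c'] w = (nxtE D Q)^[c' - c] ((nxtE D Q)^[c] w) := by
      rw [← Function.iterate_add_apply]
      congr 1
      omega
    rw [hsplit, ← hz]
    exact Function.iterate_fixed (nxtE_fix_of_s' hz2) _
  rcases le_total c c' with h | h
  · have hk := key x (origE D Q x) c c' h hc h2
    rw [hc', hk]
  · have hk := key x' (origE D Q x) c' c h hc' h2'
    rw [hc, hk]

end MAagg
namespace MAagg

variable {ι υ : Type*} [Fintype ι] [Fintype υ]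

/-- the depot-leaving edges of the support -/
def Tset (D : MTData ι υ) (Q : MICPPoint ι) : Finset (Node ι × Node ι) :=
  (Sset D Q).filter (fun e => e.1 = Sum.inr false)

lemma Tcard_eq {D : MTData ι υ} {Q : MICPPoint ι} (hQ : MICPFeas D Q) :
    ((Tset D Q).card : ℝ) = Q.α := by
  have hout := hQ.2.2.2.2.2.1
  rw [sum_binary_card (fun e he => hQ.1 e (outE_subset he)), filter_outE_eq] at hout
  exact hout

lemma Tcard_le_m {D : MTData ι υ} {Q : MICPPoint ι} (hQ : MICPFeas D Q) :
    Fintype.card (Tset D Q) ≤ D.m := by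
  have h := Tcard_eq hQ
  have hm := hQ.2.2.2.2.1
  rw [Fintype.card_coe]
  have : ((Tset D Q).card : ℝ) ≤ (D.m : ℝ) := by rw [h]; exact hm
  exact_mod_cast this

/-- the agent assigned to an edge: indexed by its origin at the depot,
default agent `0` for cycle edges -/
noncomputable def kap (D : MTData ι υ) (Q : MICPPoint ι) (x : Node ι × Node ι) :
    Fin D.m :=
  if h : origE D Q x ∈ Tset D Q ∧ Fintype.card (Tset D Q) ≤ D.m then
    Fin.castLE h.2 (Fintype.equivFin (Tset D Q) ⟨origE D Q x, h.1⟩)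
  else ⟨0, D.m_pos⟩

lemma kap_inj {D : MTData ι υ} {Q : MICPPoint ι} (hQ : MICPFeas D Q)
    {x x' : Node ι × Node ι} (hxT : origE D Q x ∈ Tset D Q)
    (hx'T : origE D Q x' ∈ Tset D Q) (hk : kap D Q x = kap D Q x') :
    origE D Q x = origE D Q x' := by
  have hm := Tcard_le_m hQ
  rw [kap, dif_pos ⟨hxT, hm⟩, kap, dif_pos ⟨hx'T, hm⟩] at hk
  have h1 := Fin.castLE_injective hm hk
  have h2 := (Fintype.equivFin (Tset D Q)).injective h1
  exact congrArg Subtype.val h2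

/-- the agent is preserved along the flow -/
lemma kap_prevE {D : MTData ι υ} {Q : MICPPoint ι} (hQ : MICPFeas D Q)
    {x : Node ι × Node ι} (hx : x ∈ Sset D Q) {i : ι} (h1 : x.1 = Sum.inl i) :
    kap D Q (prevE D Q x) = kap D Q x := by
  rcases origE_prevE hQ hx h1 with heq | ⟨hne1, hne2⟩
  · simp only [kap, heq]
  · have hT1 : origE D Q (prevE D Q x) ∉ Tset D Q :=
      fun hmem => hne1 ((Finset.mem_filter.mp hmem).2)
    have hT2 : origE D Q x ∉ Tset D Q :=
      fun hmem => hne2 ((Finset.mem_filter.mp hmem).2)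
    rw [kap, dif_neg (fun hab => hT1 hab.1), kap, dif_neg (fun hab => hT2 hab.1)]

lemma orig_of_src_s {D : MTData ι υ} {Q : MICPPoint ι}
    {x : Node ι × Node ι} (h1 : x.1 = Sum.inr false) : origE D Q x = x :=
  Function.iterate_fixed (prevE_eq_of_src_s h1) _

/-- distinct depot-leaving support edges get distinct agents -/
lemma uniq_out_s {D : MTData ι υ} {Q : MICPPoint ι} (hQ : MICPFeas D Q)
    {x x' : Node ι × Node ι} (hx : x ∈ Sset D Q) (hx' : x' ∈ Sset D Q)
    (h1 : x.1 = Sum.inr false) (h1' : x'.1 = Sum.inr false)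
    (hk : kap D Q x = kap D Q x') : x = x' := by
  have ho : origE D Q x = x := orig_of_src_s h1
  have ho' : origE D Q x' = x' := orig_of_src_s h1'
  have hxT : origE D Q x ∈ Tset D Q := by
    rw [ho]; exact Finset.mem_filter.mpr ⟨hx, h1⟩
  have hx'T : origE D Q x' ∈ Tset D Q := by
    rw [ho']; exact Finset.mem_filter.mpr ⟨hx', h1'⟩
  have := kap_inj hQ hxT hx'T hk
  rw [ho, ho'] at this
  exact this

/-- distinct support edges into the depot copy get distinct agents -/
lemma uniq_in_s' {D : MTData ι υ} {Q : MICPPoint ι} (hQ : MICPFeas D Q)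
    {x x' : Node ι × Node ι} (hx : x ∈ Sset D Q) (hx' : x' ∈ Sset D Q)
    (h2 : x.2 = Sum.inr true) (h2' : x'.2 = Sum.inr true)
    (hk : kap D Q x = kap D Q x') : x = x' := by
  have hxT : origE D Q x ∈ Tset D Q :=
    Finset.mem_filter.mpr ⟨origE_mem hQ hx, s'_orig hQ hx h2⟩
  have hx'T : origE D Q x' ∈ Tset D Q :=
    Finset.mem_filter.mpr ⟨origE_mem hQ hx', s'_orig hQ hx' h2'⟩
  exact merge_s' hQ hx hx' h2 h2' (kap_inj hQ hxT hx'T hk)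

end MAagg
namespace MAagg

variable {ι υ : Type*} [Fintype ι] [Fintype υ]

/-- the time at which agent `k` is at node `i` -/
noncomputable def tfun (D : MTData ι υ) (Q : MICPPoint ι) (k : Fin D.m)
    (i : Node ι) : ℝ :=
  if h : ∃ e, e ∈ Sset D Q ∧ e.2 = i ∧ kap D Q e = k then Q.zt' h.choose
  else if h' : ∃ e, e ∈ Sset D Q ∧ e.1 = i ∧ kap D Q e = k then Q.zt h'.choose
  else D.tlo i

/-- the disaggregated point of the nonconvex formulation -/
noncomputable def ncp (D : MTData ι υ) (Q : MICPPoint ι) : NCPoint ι D.m where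
  y e k := if e ∈ Sset D Q ∧ kap D Q e = k then 1 else 0
  l e k := if e ∈ Sset D Q ∧ kap D Q e = k then Q.l e else 0
  lxy e k := if e ∈ Sset D Q ∧ kap D Q e = k then Q.lxy e else 0
  zp e k := if e ∈ Sset D Q ∧ kap D Q e = k then Q.zp e else 0
  zt e k := if e ∈ Sset D Q ∧ kap D Q e = k then Q.zt e else 0
  zp' e k := if e ∈ Sset D Q ∧ kap D Q e = k then Q.zp' e else 0
  zt' e k := if e ∈ Sset D Q ∧ kap D Q e = k then Q.zt' e else 0
  t i k := tfun D Q k i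
  p i k := D.pos i + (tfun D Q k i - D.tlo i) • D.vel i

lemma tfun_in {D : MTData ι υ} {Q : MICPPoint ι} {k : Fin D.m}
    {e : Node ι × Node ι} {i : Node ι} (he : e ∈ Sset D Q) (h2 : e.2 = i)
    (hk : kap D Q e = k)
    (huniq : ∀ e', e' ∈ Sset D Q → e'.2 = i → kap D Q e' = k → e' = e) :
    tfun D Q k i = Q.zt' e := by
  have hex : ∃ e', e' ∈ Sset D Q ∧ e'.2 = i ∧ kap D Q e' = k := ⟨e, he, h2, hk⟩
  rw [tfun, dif_pos hex]
  obtain ⟨hc1, hc2, hc3⟩ := hex.choose_spec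
  rw [huniq _ hc1 hc2 hc3]

lemma tfun_out_s {D : MTData ι υ} {Q : MICPPoint ι} (hQ : MICPFeas D Q) {k : Fin D.m}
    {e : Node ι × Node ι} (he : e ∈ Sset D Q) (h1 : e.1 = Sum.inr false)
    (hk : kap D Q e = k) : tfun D Q k (Sum.inr false) = Q.zt e := by
  have hnex : ¬ ∃ e', e' ∈ Sset D Q ∧ e'.2 = Sum.inr false ∧ kap D Q e' = k := by
    rintro ⟨e', he', h2', -⟩
    exact snd_ne_s (Sset_subset he') h2'
  have hex : ∃ e', e' ∈ Sset D Q ∧ e'.1 = Sum.inr false ∧ kap D Q e' = k :=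
    ⟨e, he, h1, hk⟩
  rw [tfun, dif_neg hnex, dif_pos hex]
  obtain ⟨hc1, hc2, hc3⟩ := hex.choose_spec
  rw [uniq_out_s hQ hc1 he hc2 h1 (by rw [hc3, hk])]

lemma tfun_bounds {D : MTData ι υ} {Q : MICPPoint ι} (hQ : MICPFeas D Q)
    (k : Fin D.m) (i : Node ι) :
    D.tlo i ≤ tfun D Q k i ∧ tfun D Q k i ≤ D.thi i := by
  have hedge := hQ.2.2.2.2.2.2.2.2.2.2
  rw [tfun]
  split_ifs with h h'
  · obtain ⟨hc1, hc2, hc3⟩ := h.choose_spec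
    have hE := hedge _ (Sset_subset hc1)
    have hy1 : Q.y h.choose = 1 := (mem_Sset.mp hc1).2
    rw [hy1] at hE
    simp only [one_mul] at hE
    rw [hc2] at hE
    exact ⟨hE.2.2.1, hE.2.2.2.1⟩
  · obtain ⟨hc1, hc2, hc3⟩ := h'.choose_spec
    have hE := hedge _ (Sset_subset hc1)
    have hy1 : Q.y h'.choose = 1 := (mem_Sset.mp hc1).2
    rw [hy1] at hE
    simp only [one_mul] at hE
    rw [hc2] at hE
    exact ⟨hE.1, hE.2.1⟩
  · exact ⟨le_refl _, D.tw i⟩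

/-- pointwise time conservation across a segment node -/
lemma zt_conserve {D : MTData ι υ} {Q : MICPPoint ι} (hQ : MICPFeas D Q)
    {e e' : Node ι × Node ι} {i : ι} (he : e ∈ Sset D Q) (he' : e' ∈ Sset D Q)
    (h2 : e.2 = Sum.inl i) (h1' : e'.1 = Sum.inl i) : Q.zt' e = Q.zt e' := by
  have htcons := hQ.2.2.2.2.2.2.2.2.2.1 i
  have hL : ∑ b ∈ inE D (Sum.inl i), Q.zt' b = Q.zt' e := by
    refine Finset.sum_eq_single_of_mem e (mem_inE.mpr ⟨Sset_subset he, h2⟩) ?_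
    intro b hb hbe
    have hbE := (mem_inE.mp hb).1
    have hbS : b ∉ Sset D Q := by
      intro hbS
      exact hbe (uniqIn hQ hbS he (mem_inE.mp hb).2 h2)
    exact (vanish_of_notMem hQ hbE hbS).2.1
  have hR : ∑ b ∈ outE D (Sum.inl i), Q.zt b = Q.zt e' := by
    refine Finset.sum_eq_single_of_mem e' (mem_outE.mpr ⟨Sset_subset he', h1'⟩) ?_
    intro b hb hbe
    have hbE := (mem_outE.mp hb).1
    have hbS : b ∉ Sset D Q := by
      intro hbS
      exact hbe (uniqOut hQ hbS he' (mem_outE.mp hb).2 h1')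
    exact (vanish_of_notMem hQ hbE hbS).1
  rw [← hL, ← hR, htcons]

/-- the time of the assigned agent at the source of a support edge -/
lemma tfun_src {D : MTData ι υ} {Q : MICPPoint ι} (hQ : MICPFeas D Q) {k : Fin D.m}
    {e : Node ι × Node ι} (he : e ∈ Sset D Q) (hk : kap D Q e = k) :
    tfun D Q k e.1 = Q.zt e := by
  rcases src_cases he with h1 | ⟨i, h1⟩
  · rw [h1]; exact tfun_out_s hQ he h1 hk
  · have hp := prevE_spec_of_seg hQ he h1
    have hkp : kap D Q (prevE D Q e) = k := by rw [kap_prevE hQ he h1, hk]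
    have huniq : ∀ e', e' ∈ Sset D Q → e'.2 = e.1 → kap D Q e' = k →
        e' = prevE D Q e := by
      intro e' he' h2' _
      exact uniqIn hQ he' hp.1 (by rw [h2', h1]) (by rw [hp.2, h1])
    rw [tfun_in hp.1 hp.2 hkp huniq]
    exact zt_conserve hQ hp.1 he (by rw [hp.2, h1]) h1

/-- the time of the assigned agent at the target of a support edge -/
lemma tfun_dst {D : MTData ι υ} {Q : MICPPoint ι} (hQ : MICPFeas D Q) {k : Fin D.m}
    {e : Node ι × Node ι} (he : e ∈ Sset D Q) (hk : kap D Q e = k) :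
    tfun D Q k e.2 = Q.zt' e := by
  rcases edge_cases (Sset_subset he) with ⟨-, j, h2⟩ | ⟨i, j, -, h2, -⟩ | ⟨-, h2⟩
  · refine tfun_in he rfl hk ?_
    intro e' he' h2' _
    exact uniqIn hQ he' he (h2'.trans h2) h2
  · refine tfun_in he rfl hk ?_
    intro e' he' h2' _
    exact uniqIn hQ he' he (h2'.trans h2) h2
  · refine tfun_in he rfl hk ?_
    intro e' he' h2' hk'
    exact uniq_in_s' hQ he' he (h2'.trans h2) h2 (by rw [hk', hk])

end MAagg
namespace MAagg

variable {ι υ : Type*} [Fintype ι] [Fintype υ]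

lemma gated_sum {D : MTData ι υ} {Q : MICPPoint ι} (v : Node ι × Node ι → ℝ)
    (e : Node ι × Node ι) (hv : e ∉ Sset D Q → v e = 0) :
    ∑ k : Fin D.m, (if e ∈ Sset D Q ∧ kap D Q e = k then v e else 0) = v e := by
  by_cases he : e ∈ Sset D Q
  · simp only [he, true_and]
    rw [Finset.sum_ite_eq (Finset.univ) (kap D Q e) (fun _ => v e)]
    simp
  · simp only [he, false_and, if_false, Finset.sum_const_zero]
    exact (hv he).symm

lemma exists_nc_of_micp (D : MTData ι υ) (Q : MICPPoint ι) (hQ : MICPFeas D Q) :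
    ∃ P : NCPoint ι D.m, NCFeas D P ∧
      (1 ≤ ∑ k, ∑ e ∈ outE D (Sum.inr false), P.y e k) ∧
      NCObj D P = MICPObj D Q := by
  obtain ⟨hy01, hl0, hint, hα1, hαm, hout, hin, hclu, hcons, htcons, hedge⟩ := hQ
  have hQ' : MICPFeas D Q :=
    ⟨hy01, hl0, hint, hα1, hαm, hout, hin, hclu, hcons, htcons, hedge⟩
  refine ⟨ncp D Q, ?_, ?_, ?_⟩
  case _ => -- feasibility
    have hysum : ∀ e ∈ edges D, ∑ k, (ncp D Q).y e k = Q.y e := by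
      intro e he
      show ∑ k : Fin D.m, (if e ∈ Sset D Q ∧ kap D Q e = k then (1:ℝ) else 0) = Q.y e
      by_cases heS : e ∈ Sset D Q
      · have hg := gated_sum (D := D) (Q := Q) (fun _ => (1:ℝ)) e
          (fun h => absurd heS h)
        rw [hg, (mem_Sset.mp heS).2]
      · simp only [heS, false_and, if_false, Finset.sum_const_zero]
        exact (y_zero_of_notMem hQ' he heS).symm
    refine ⟨?_, ?_, ?_, ?_, ?_, ?_, ?_, ?_, ?_⟩
    · -- binary
      intro e he k
      by_cases h : e ∈ Sset D Q ∧ kap D Q e = k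
      · right; show (if _ ∧ _ then (1:ℝ) else 0) = 1; rw [if_pos h]
      · left; show (if _ ∧ _ then (1:ℝ) else 0) = 0; rw [if_neg h]
    · -- l nonneg
      intro e he k
      show 0 ≤ if e ∈ Sset D Q ∧ kap D Q e = k then Q.l e else 0
      split_ifs with h
      · exact hl0 e he
      · exact le_refl 0
    · -- out-degree of depot at most 1 per agent
      intro k
      show ∑ e ∈ outE D (Sum.inr false),
        (if e ∈ Sset D Q ∧ kap D Q e = k then (1:ℝ) else 0) ≤ 1
      rw [Finset.sum_boole]
      have hc : ((outE D (Sum.inr false)).filter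
          (fun e => e ∈ Sset D Q ∧ kap D Q e = k)).card ≤ 1 := by
        refine Finset.card_le_one.mpr ?_
        intro a ha b hb
        have ha' := Finset.mem_filter.mp ha
        have hb' := Finset.mem_filter.mp hb
        exact uniq_out_s hQ' ha'.2.1 hb'.2.1 (mem_outE.mp ha'.1).2
          (mem_outE.mp hb'.1).2 (by rw [ha'.2.2, hb'.2.2])
      exact_mod_cast hc
    · -- in-degree of depot copy at most 1 per agent
      intro k
      show ∑ e ∈ inE D (Sum.inr true),
        (if e ∈ Sset D Q ∧ kap D Q e = k then (1:ℝ) else 0) ≤ 1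
      rw [Finset.sum_boole]
      have hc : ((inE D (Sum.inr true)).filter
          (fun e => e ∈ Sset D Q ∧ kap D Q e = k)).card ≤ 1 := by
        refine Finset.card_le_one.mpr ?_
        intro a ha b hb
        have ha' := Finset.mem_filter.mp ha
        have hb' := Finset.mem_filter.mp hb
        exact uniq_in_s' hQ' ha'.2.1 hb'.2.1 (mem_inE.mp ha'.1).2
          (mem_inE.mp hb'.1).2 (by rw [ha'.2.2, hb'.2.2])
      exact_mod_cast hc
    · -- clusters visited exactly once
      intro u
      rw [Finset.sum_comm]
      calc ∑ i ∈ Finset.univ.filter (fun i => D.cl i = u),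
            ∑ k, ∑ e ∈ inE D (Sum.inl i), (ncp D Q).y e k
          = ∑ i ∈ Finset.univ.filter (fun i => D.cl i = u),
            ∑ e ∈ inE D (Sum.inl i), Q.y e := by
            refine Finset.sum_congr rfl fun i _ => ?_
            rw [Finset.sum_comm]
            exact Finset.sum_congr rfl fun e he => hysum e (inE_subset he)
        _ = 1 := hclu u
    · -- flow conservation at segment nodes per agent
      intro i k
      show ∑ e ∈ inE D (Sum.inl i),
            (if e ∈ Sset D Q ∧ kap D Q e = k then (1:ℝ) else 0)
          = ∑ e ∈ outE D (Sum.inl i),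
            (if e ∈ Sset D Q ∧ kap D Q e = k then (1:ℝ) else 0)
      rw [Finset.sum_boole, Finset.sum_boole]
      congr 1
      set A := (inE D (Sum.inl i)).filter (fun e => e ∈ Sset D Q ∧ kap D Q e = k)
        with hA
      set B := (outE D (Sum.inl i)).filter (fun e => e ∈ Sset D Q ∧ kap D Q e = k)
        with hB
      have hcA : A.card ≤ 1 := by
        refine Finset.card_le_one.mpr ?_
        intro a ha b hb
        have ha' := Finset.mem_filter.mp ha
        have hb' := Finset.mem_filter.mp hb
        exact uniqIn hQ' ha'.2.1 hb'.2.1 (mem_inE.mp ha'.1).2 (mem_inE.mp hb'.1).2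
      have hcB : B.card ≤ 1 := by
        refine Finset.card_le_one.mpr ?_
        intro a ha b hb
        have ha' := Finset.mem_filter.mp ha
        have hb' := Finset.mem_filter.mp hb
        exact uniqOut hQ' ha'.2.1 hb'.2.1 (mem_outE.mp ha'.1).2 (mem_outE.mp hb'.1).2
      have hiff : A.Nonempty ↔ B.Nonempty := by
        constructor
        · rintro ⟨e, heA⟩
          have he' := Finset.mem_filter.mp heA
          have heE := he'.1
          have heS := he'.2.1
          have hek := he'.2.2
          have h2 : e.2 = Sum.inl i := (mem_inE.mp heE).2
          obtain ⟨e', he'S, h1'⟩ := exOut hQ' heS h2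
          have hpe : prevE D Q e' = e := by
            have hsp := prevE_spec_of_seg hQ' he'S h1'
            exact uniqIn hQ' hsp.1 heS (by rw [hsp.2, h1']) h2
          have hk' : kap D Q e' = k := by
            rw [← kap_prevE hQ' he'S h1', hpe, hek]
          refine ⟨e', Finset.mem_filter.mpr ⟨mem_outE.mpr ⟨Sset_subset he'S, h1'⟩,
            he'S, hk'⟩⟩
        · rintro ⟨e', he'B⟩
          have he'' := Finset.mem_filter.mp he'B
          have he'E := he''.1
          have he'S := he''.2.1
          have he'k := he''.2.2
          have h1' : e'.1 = Sum.inl i := (mem_outE.mp he'E).2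
          have hsp := prevE_spec_of_seg hQ' he'S h1'
          have hk : kap D Q (prevE D Q e') = k := by
            rw [kap_prevE hQ' he'S h1', he'k]
          refine ⟨prevE D Q e', Finset.mem_filter.mpr
            ⟨mem_inE.mpr ⟨Sset_subset hsp.1, by rw [hsp.2, h1']⟩, hsp.1, hk⟩⟩
      have h0 : A.card = 0 ↔ B.card = 0 := by
        rw [Finset.card_eq_zero, Finset.card_eq_zero,
          ← Finset.not_nonempty_iff_eq_empty, ← Finset.not_nonempty_iff_eq_empty]
        exact not_congr hiff
      omega
    · -- time windows
      intro i k
      exact tfun_bounds hQ' k i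
    · -- positions
      intro i k
      rfl
    · -- edge constraints
      intro e he k
      by_cases hcase : e ∈ Sset D Q ∧ kap D Q e = k
      · obtain ⟨heS, hk⟩ := hcase
        have hcase' : e ∈ Sset D Q ∧ kap D Q e = k := ⟨heS, hk⟩
        have hy : (ncp D Q).y e k = 1 := if_pos hcase'
        have hzp : (ncp D Q).zp e k = Q.zp e := if_pos hcase'
        have hzt : (ncp D Q).zt e k = Q.zt e := if_pos hcase'
        have hzp' : (ncp D Q).zp' e k = Q.zp' e := if_pos hcase'
        have hzt' : (ncp D Q).zt' e k = Q.zt' e := if_pos hcase'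
        have hl : (ncp D Q).l e k = Q.l e := if_pos hcase'
        have hlxy : (ncp D Q).lxy e k = Q.lxy e := if_pos hcase'
        have hy1 : Q.y e = 1 := (mem_Sset.mp heS).2
        have hE := hedge e he
        rw [hy1] at hE
        simp only [one_mul, one_smul] at hE
        have htsrc : (ncp D Q).t e.1 k = Q.zt e := tfun_src hQ' heS hk
        have htdst : (ncp D Q).t e.2 k = Q.zt' e := tfun_dst hQ' heS hk
        refine ⟨?_, ?_, ?_, ?_, ?_, ?_, ?_⟩
        · rw [hzp, hy, one_smul]
          show Q.zp e = D.pos e.1 + ((ncp D Q).t e.1 k - D.tlo e.1) • D.vel e.1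
          rw [htsrc, hE.2.2.2.2.1]
          module
        · rw [hzt, hy, one_mul, htsrc]
        · rw [hzp', hy, one_smul]
          show Q.zp' e = D.pos e.2 + ((ncp D Q).t e.2 k - D.tlo e.2) • D.vel e.2
          rw [htdst, hE.2.2.2.2.2.1]
          module
        · rw [hzt', hy, one_mul, htdst]
        · rw [hl, hzt, hzt']
          exact hE.2.2.2.2.2.2.1
        · rw [hlxy, hzp, hzp']
          exact hE.2.2.2.2.2.2.2.1
        · rw [hlxy, hl]
          exact hE.2.2.2.2.2.2.2.2
      · have hy : (ncp D Q).y e k = 0 := if_neg hcase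
        have hzp : (ncp D Q).zp e k = 0 := if_neg hcase
        have hzt : (ncp D Q).zt e k = 0 := if_neg hcase
        have hzp' : (ncp D Q).zp' e k = 0 := if_neg hcase
        have hzt' : (ncp D Q).zt' e k = 0 := if_neg hcase
        have hl : (ncp D Q).l e k = 0 := if_neg hcase
        have hlxy : (ncp D Q).lxy e k = 0 := if_neg hcase
        refine ⟨?_, ?_, ?_, ?_, ?_, ?_, ?_⟩
        · rw [hzp, hy, zero_smul]
        · rw [hzt, hy, zero_mul]
        · rw [hzp', hy, zero_smul]
        · rw [hzt', hy, zero_mul]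
        · rw [hl, hzt, hzt']; simp
        · rw [hlxy, hzp, hzp']; simp
        · rw [hlxy, hl]; simp
  case _ => -- at least one agent leaves the depot
    have : ∑ k, ∑ e ∈ outE D (Sum.inr false), (ncp D Q).y e k = Q.α := by
      rw [Finset.sum_comm, ← hout]
      refine Finset.sum_congr rfl fun e he => ?_
      show ∑ k : Fin D.m, (if e ∈ Sset D Q ∧ kap D Q e = k then (1:ℝ) else 0) = Q.y e
      by_cases heS : e ∈ Sset D Q
      · have hg := gated_sum (D := D) (Q := Q) (fun _ => (1:ℝ)) e
          (fun h => absurd heS h)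
        rw [hg, (mem_Sset.mp heS).2]
      · simp only [heS, false_and, if_false, Finset.sum_const_zero]
        exact (y_zero_of_notMem hQ' (outE_subset he) heS).symm
    rw [this]
    exact hα1
  case _ => -- same objective
    show ∑ k, ∑ e ∈ edges D, (ncp D Q).l e k = ∑ e ∈ edges D, Q.l e
    rw [Finset.sum_comm]
    refine Finset.sum_congr rfl fun e he => ?_
    exact gated_sum Q.l e (fun h => (vanish_of_notMem hQ' he h).2.2.2.2.1)

end MAagg
/-- For every feasible point of the nonconvex formulation in which at
least one agent leaves the depot, the point obtained by aggregating over agents is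
feasible for the MICP formulation and has the same objective value.  In particular,
the optimal value of the MICP formulation is at most the optimal value of the
nonconvex formulation over such points. -/
theorem aggregate_feasible_same_objective
    {ι υ : Type*} [Fintype ι] [Fintype υ] (D : MTData ι υ) :
    (∀ P : NCPoint ι D.m, NCFeas D P →
      1 ≤ ∑ k, ∑ e ∈ outE D (Sum.inr false), P.y e k →
      MICPFeas D (aggregate D P) ∧ MICPObj D (aggregate D P) = NCObj D P) ∧
    sInf {c : ℝ | ∃ Q : MICPPoint ι, MICPFeas D Q ∧ MICPObj D Q = c} ≤
      sInf {c : ℝ | ∃ P : NCPoint ι D.m, NCFeas D P ∧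
        1 ≤ ∑ k, ∑ e ∈ outE D (Sum.inr false), P.y e k ∧ NCObj D P = c} := by
  constructor
  · exact fun P hP hflow => MAagg.aggregate_main D P hP hflow
  · set A := {c : ℝ | ∃ Q : MICPPoint ι, MICPFeas D Q ∧ MICPObj D Q = c} with hA
    set B := {c : ℝ | ∃ P : NCPoint ι D.m, NCFeas D P ∧
      1 ≤ ∑ k, ∑ e ∈ outE D (Sum.inr false), P.y e k ∧ NCObj D P = c} with hB
    have hbdd : BddBelow A := by
      refine ⟨0, fun c hc => ?_⟩
      obtain ⟨Q, hQ, hobj⟩ := hc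
      rw [← hobj]
      exact Finset.sum_nonneg fun e he => hQ.2.1 e he
    have hBA : B ⊆ A := by
      intro c hc
      obtain ⟨P, hP, hflow, hobj⟩ := hc
      obtain ⟨hfeas, hsame⟩ := MAagg.aggregate_main D P hP hflow
      exact ⟨aggregate D P, hfeas, by rw [hsame, hobj]⟩
    by_cases hBne : B.Nonempty
    · exact csInf_le_csInf hbdd hBne hBA
    · have hBempty : B = ∅ := Set.not_nonempty_iff_eq_empty.mp hBne
      have hAempty : A = ∅ := by
        by_contra hAne
        obtain ⟨c, Q, hQ, hobj⟩ := Set.nonempty_iff_ne_empty.mpr hAne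
        obtain ⟨P, hP, hflow, hobj'⟩ := MAagg.exists_nc_of_micp D Q hQ
        exact hBne ⟨NCObj D P, P, hP, hflow, rfl⟩
      rw [hAempty, hBempty]

end
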